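/- Let f, g : ℝ → ℝ be lifts of orientation-preserving circle homeomorphisms (so f(x+1) = f(x)+1 and g(x+1) = g(x)+1). Suppose g is conjugated to the translation t_α : x ↦ x + α by a homeomorphism h that is a lift of an orientation-preserving circle homeomorphism, where both h and h⁻¹ are K-Lipschitz. If there exists d > 0 with f < g + d pointwise, then the rotation number of f satisfies ρ(f) ≤ ρ(g) + K·d. -/

import Mathlib

open Filter

private lemma lift_int {φ : ℝ → ℝ} (hφ : ∀ x, φ (x + 1) = φ x + 1) :
    ∀ (m : ℤ) (x : ℝ), φ (x + m) = φ x + m := by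
  intro m
  induction m using Int.induction_on with
  | zero => simp
  | succ n ih =>
      intro x
      have e : x + (((n : ℤ) + 1 : ℤ) : ℝ) = x + (n : ℤ) + 1 := by push_cast; ring
      rw [e, hφ, ih]; push_cast; ring
  | pred n ih =>
      intro x
      have h1 : φ x = φ (x - 1) + 1 := by
        have := hφ (x - 1); rw [sub_add_cancel] at this; rw [this]
      have e : x + ((-(n : ℤ) - 1 : ℤ) : ℝ) = (x - 1) + ((-(n : ℤ) : ℤ) : ℝ) := by
        push_cast; ring
      rw [e, ih, h1]; push_cast; ring

private lemma lift_upper {φ : ℝ → ℝ} (hm : Monotone φ)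
    (hφ : ∀ x, φ (x + 1) = φ x + 1) (x t : ℝ) : φ (x + t) ≤ φ x + t + 1 := by
  have h1 : φ (x + t) ≤ φ (x + (⌈t⌉ : ℤ)) := hm (by linarith [Int.le_ceil t])
  rw [lift_int hφ] at h1
  have h2 : (⌈t⌉ : ℝ) < t + 1 := Int.ceil_lt_add_one t
  linarith

private lemma lift_lower {φ : ℝ → ℝ} (hm : Monotone φ)
    (hφ : ∀ x, φ (x + 1) = φ x + 1) (x t : ℝ) : φ x + t - 1 ≤ φ (x + t) := by
  have h1 : φ (x + (⌊t⌋ : ℤ)) ≤ φ (x + t) := hm (by linarith [Int.floor_le t])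
  rw [lift_int hφ] at h1
  have h2 : t - 1 < (⌊t⌋ : ℝ) := Int.sub_one_lt_floor t
  linarith

/-- rotation number comparison, upper bound. `f, g` are lifts of
orientation-preserving circle homeomorphisms, `g` is conjugated to the translation
`x ↦ x + α` by a lift `h` of an orientation-preserving circle homeomorphism such that
`h` and its inverse `hinv` are `K`-Lipschitz. If `f < g + d` pointwise with `d > 0`,
then `ρ(f) ≤ ρ(g) + K·d`, where rotation numbers are the limits `ρ(F) = lim Fⁿ(0)/n`. -/
theorem stmt1 (f g h hinv : ℝ → ℝ) (α K d ρf ρg : ℝ)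
    (hK : 1 ≤ K) (hd : 0 < d)
    (hf_cont : Continuous f) (hf_mono : StrictMono f)
    (hf_lift : ∀ x, f (x + 1) = f x + 1)
    (hg_cont : Continuous g) (hg_mono : StrictMono g)
    (hg_lift : ∀ x, g (x + 1) = g x + 1)
    (hh_mono : StrictMono h)
    (hh_lift : ∀ x, h (x + 1) = h x + 1)
    (hh_linv : Function.LeftInverse hinv h)
    (hh_rinv : Function.RightInverse hinv h)
    (hh_lip : ∀ x y, |h x - h y| ≤ K * |x - y|)
    (hhinv_lip : ∀ x y, |hinv x - hinv y| ≤ K * |x - y|)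
    (hconj : ∀ x, h (g (hinv x)) = x + α)
    (hρf : Tendsto (fun n : ℕ => f^[n] 0 / n) atTop (nhds ρf))
    (hρg : Tendsto (fun n : ℕ => g^[n] 0 / n) atTop (nhds ρg))
    (hlt : ∀ x, f x < g x + d) :
    ρf ≤ ρg + K * d := by
  -- hinv is monotone
  have hinv_mono : Monotone hinv := by
    intro a b hab
    by_contra hc
    push_neg at hc
    have := hh_mono hc
    rw [hh_rinv, hh_rinv] at this
    linarith
  -- hinv is a degree-one lift
  have hinv_lift : ∀ x, hinv (x + 1) = hinv x + 1 := by
    intro x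
    apply hh_mono.injective
    rw [hh_rinv, hh_lift, hh_rinv]
  have hinv0 : hinv (h 0) = 0 := hh_linv 0
  -- conjugacy: h ∘ g = (· + α) ∘ h
  have hg_conj : ∀ y, h (g y) = h y + α := by
    intro y
    have := hconj (h y)
    rwa [hh_linv] at this
  -- iterates of g
  have hg_iter : ∀ n : ℕ, h (g^[n] 0) = h 0 + n * α := by
    intro n
    induction n with
    | zero => simp
    | succ n ih =>
        rw [Function.iterate_succ_apply', hg_conj, ih]
        push_cast; ring
  have hg_bound : ∀ n : ℕ, (n : ℝ) * α - 1 ≤ g^[n] 0 ∧ g^[n] 0 ≤ (n : ℝ) * α + 1 := by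
    intro n
    have heq : g^[n] 0 = hinv (h 0 + n * α) := by
      have := hg_iter n
      rw [← this, hh_linv]
    constructor
    · have := lift_lower hinv_mono hinv_lift (h 0) ((n : ℝ) * α)
      rw [hinv0] at this; rw [heq]; linarith
    · have := lift_upper hinv_mono hinv_lift (h 0) ((n : ℝ) * α)
      rw [hinv0] at this; rw [heq]; linarith
  -- a small limit helper
  have hlim : ∀ β c : ℝ, Tendsto (fun n : ℕ => β + c / n) atTop (nhds β) := by
    intro β c
    have := tendsto_const_div_atTop_nhds_zero_nat c
    simpa using tendsto_const_nhds.add this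
  -- ρg = α
  have hρg_eq : ρg = α := by
    refine tendsto_nhds_unique hρg ?_
    refine tendsto_of_tendsto_of_tendsto_of_le_of_le' (hlim α (-1)) (hlim α 1) ?_ ?_
    · filter_upwards [eventually_ge_atTop 1] with n hn
      have hn' : (0 : ℝ) < n := by exact_mod_cast hn
      calc α + (-1) / n = ((n : ℝ) * α - 1) / n := by field_simp; ring
        _ ≤ g^[n] 0 / n := div_le_div_of_nonneg_right ((hg_bound n).1) hn'.le
    · filter_upwards [eventually_ge_atTop 1] with n hn
      have hn' : (0 : ℝ) < n := by exact_mod_cast hn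
      calc g^[n] 0 / n ≤ ((n : ℝ) * α + 1) / n :=
            div_le_div_of_nonneg_right ((hg_bound n).2) hn'.le
        _ = α + 1 / n := by field_simp
  -- key inequality after conjugation
  have hkey : ∀ y, h (f y) ≤ h y + (α + K * d) := by
    intro y
    have h1 : h (f y) < h (g y + d) := hh_mono (hlt y)
    have h2 : h (g y + d) - h (g y) ≤ K * d := by
      have := hh_lip (g y + d) (g y)
      have habs : |g y + d - g y| = d := by
        rw [add_sub_cancel_left, abs_of_pos hd]
      rw [habs] at this
      exact (le_abs_self _).trans this
    have h3 := hg_conj y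
    linarith
  -- iterate the key inequality
  have hf_iter : ∀ n : ℕ, h (f^[n] 0) ≤ h 0 + n * (α + K * d) := by
    intro n
    induction n with
    | zero => simp
    | succ n ih =>
        rw [Function.iterate_succ_apply']
        have h1 := hkey (f^[n] 0)
        push_cast
        have h2 : h (f^[n] 0) + (α + K * d) ≤ h 0 + n * (α + K * d) + (α + K * d) := by
          linarith
        calc h (f (f^[n] 0)) ≤ h (f^[n] 0) + (α + K * d) := h1
          _ ≤ h 0 + (n + 1) * (α + K * d) := by linarith
  -- bound on f^[n] 0
  have hf_bound : ∀ n : ℕ, f^[n] 0 ≤ n * (α + K * d) + 1 := by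
    intro n
    have h1 : hinv (h (f^[n] 0)) ≤ hinv (h 0 + n * (α + K * d)) :=
      hinv_mono (hf_iter n)
    rw [hh_linv] at h1
    have h2 := lift_upper hinv_mono hinv_lift (h 0) ((n : ℝ) * (α + K * d))
    rw [hinv0] at h2
    linarith
  -- conclude
  have hfinal : ρf ≤ α + K * d := by
    refine le_of_tendsto_of_tendsto hρf (hlim (α + K * d) 1) ?_
    filter_upwards [eventually_ge_atTop 1] with n hn
    have hn' : (0 : ℝ) < n := by exact_mod_cast hn
    calc f^[n] 0 / n ≤ ((n : ℝ) * (α + K * d) + 1) / n :=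
          div_le_div_of_nonneg_right (hf_bound n) hn'.le
      _ = (α + K * d) + 1 / n := by field_simp
  rw [hρg_eq]
  linarith
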